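/- Let Ψ ∈ ℝ^{N×N} be symmetric and negative semidefinite, with all off-diagonal entries nonnegative, and suppose there exists c ≥ 0 such that Ψ + cI is a nonnegative irreducible matrix. Then for every z ∈ ℝ^N with z ≥ 0, z ≠ 0, and z_i = 0 for at least one index i, one has zᵀΨz < 0. (This is the key quadratic-form estimate in the proof of global asymptotic stability of the healthy state for the case ρ(D_f^{-1}B_f) = 1.) -/

import Mathlib

open Matrix

variable {n m : ℕ}

/-- The block matrix `B_f = [[B, B_w],[C_w, A_w − diag A_w]]`. -/
def BfM (B : Matrix (Fin n) (Fin n) ℝ) (Bw : Matrix (Fin n) (Fin m) ℝ)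
    (Cw : Matrix (Fin m) (Fin n) ℝ) (Aw : Matrix (Fin m) (Fin m) ℝ) :
    Matrix (Fin n ⊕ Fin m) (Fin n ⊕ Fin m) ℝ :=
  Matrix.fromBlocks B Bw Cw (Aw - Matrix.diagonal (fun j => Aw j j))

/-- The block diagonal matrix `D_f = blockdiag(D, D_w − diag A_w)`. -/
def DfM (δ : Fin n → ℝ) (δw : Fin m → ℝ) (Aw : Matrix (Fin m) (Fin m) ℝ) :
    Matrix (Fin n ⊕ Fin m) (Fin n ⊕ Fin m) ℝ :=
  Matrix.fromBlocks (Matrix.diagonal δ) 0 0 (Matrix.diagonal (fun j => δw j - Aw j j))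

/-- `X(z) = diag(x_1,…,x_n,0,…,0)` for `z = (x,w)`. -/
def XzM (z : Fin n ⊕ Fin m → ℝ) :
    Matrix (Fin n ⊕ Fin m) (Fin n ⊕ Fin m) ℝ :=
  Matrix.diagonal (Sum.elim (fun a => z (Sum.inl a)) (fun _ => (0:ℝ)))

/-- A (nonnegative) square matrix is irreducible if for every pair of indices `i, j`
there is `k ≥ 1` with `(M^k) i j > 0`. -/
def MatIrred {N : Type*} [Fintype N] [DecidableEq N] (M : Matrix N N ℝ) : Prop :=
  ∀ i j, ∃ k : ℕ, 1 ≤ k ∧ 0 < (M ^ k) i j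

/-- The spectral radius of a real matrix: the supremum of the moduli of its
complex eigenvalues. -/
noncomputable def specRad {N : Type*} [Fintype N] [DecidableEq N] (M : Matrix N N ℝ) : ENNReal :=
  spectralRadius ℂ (M.map (algebraMap ℝ ℂ))

/-- the key quadratic-form estimate: a symmetric negative semidefinite
irreducible Metzler matrix satisfies `zᵀ Ψ z < 0` for every nonnegative nonzero `z`
having at least one zero entry. -/
theorem metzler_psd_quadratic_form_neg {N : ℕ} (hN : 0 < N)
    (Ψ : Matrix (Fin N) (Fin N) ℝ)
    (hsym : Ψᵀ = Ψ)
    (hnsd : ∀ v : Fin N → ℝ, v ⬝ᵥ (Ψ *ᵥ v) ≤ 0)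
    (hmetzler : ∀ i j, i ≠ j → 0 ≤ Ψ i j)
    (hirr : ∃ c : ℝ, 0 ≤ c ∧
      (∀ i j, 0 ≤ (Ψ + c • (1 : Matrix (Fin N) (Fin N) ℝ)) i j) ∧
      MatIrred (Ψ + c • (1 : Matrix (Fin N) (Fin N) ℝ)))
    (z : Fin N → ℝ) (hz : ∀ i, 0 ≤ z i) (hz0 : z ≠ 0) (hzero : ∃ i, z i = 0) :
    z ⬝ᵥ (Ψ *ᵥ z) < 0 := by
  obtain ⟨c, hc0, hMnn, hMirr⟩ := hirr
  set M := Ψ + c • (1 : Matrix (Fin N) (Fin N) ℝ) with hM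
  rcases lt_or_eq_of_le (hnsd z) with h | h
  · exact h
  exfalso
  -- -Ψ is PosSemidef
  have hpsd : (-Ψ).PosSemidef := by
    rw [posSemidef_iff_dotProduct_mulVec]
    constructor
    · unfold Matrix.IsHermitian
      rw [conjTranspose_neg]
      simp only [neg_inj]
      rw [show Ψᴴ = Ψᵀ from rfl, hsym]
    · intro x
      have := hnsd x
      simp only [star_trivial, neg_mulVec, dotProduct_neg]
      linarith
  have hker : Ψ *ᵥ z = 0 := by
    have := (hpsd.dotProduct_mulVec_zero_iff z).mp ?_
    · have h2 : -(Ψ *ᵥ z) = 0 := by rwa [neg_mulVec] at this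
      simpa using h2
    · simp only [star_trivial, neg_mulVec, dotProduct_neg]
      rw [h]; simp
  -- M *ᵥ z = c • z
  have hMz : M *ᵥ z = c • z := by
    rw [hM, add_mulVec, hker, zero_add, smul_mulVec, one_mulVec]
  have hMkz : ∀ k : ℕ, (M ^ k) *ᵥ z = (c ^ k) • z := by
    intro k
    induction k with
    | zero => simp
    | succ k ih =>
      rw [pow_succ, ← mulVec_mulVec, hMz, mulVec_smul, ih, smul_smul, pow_succ, mul_comm]
  have hMknn : ∀ k : ℕ, ∀ i j, 0 ≤ (M ^ k) i j := by
    intro k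
    induction k with
    | zero => intro i j; by_cases hij : i = j <;> simp [Matrix.one_apply, hij]
    | succ k ih =>
      intro i j
      rw [pow_succ, Matrix.mul_apply]
      exact Finset.sum_nonneg fun l _ => mul_nonneg (ih i l) (hMnn l j)
  obtain ⟨i, hi⟩ := hzero
  obtain ⟨j, hj⟩ : ∃ j, z j ≠ 0 := by
    by_contra hcon
    push_neg at hcon
    exact hz0 (funext hcon)
  have hjpos : 0 < z j := lt_of_le_of_ne (hz j) (Ne.symm hj)
  obtain ⟨k, hk1, hkpos⟩ := hMirr i j
  have hlhs : ((M ^ k) *ᵥ z) i = 0 := by rw [hMkz]; simp [hi]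
  have : 0 < ((M ^ k) *ᵥ z) i := by
    rw [Matrix.mulVec, dotProduct]
    have : (0:ℝ) < (M ^ k) i j * z j := mul_pos hkpos hjpos
    refine lt_of_lt_of_le this ?_
    exact Finset.single_le_sum (f := fun l => (M ^ k) i l * z l)
      (fun l _ => mul_nonneg (hMknn k i l) (hz l)) (Finset.mem_univ j)
  linarith [hlhs ▸ this]
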